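/- (Generalised Uniqueness Theorem) Let G be an ample Hausdorff groupoid, R a unital commutative ring, (Σ, i, q) a discrete twist over G, and suppose X_Σ = {u ∈ Σ⁽⁰⁾ : Σᵤᵘ ⊆ Iso(Σ)°} is dense in Σ⁽⁰⁾. Let Q be a ring and π : A_R(G; Σ) → Q a ring homomorphism. Then π is injective if and only if π(ι(f)) ≠ 0 for every nonzero f ∈ A_R(Iso(G)°; Iso(Σ)°), where ι is the natural inclusion of A_R(Iso(G)°; Iso(Σ)°) into A_R(G; Σ). -/

import Mathlib

open Set Function TopologicalSpace Classical
noncomputable section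

universe u v w

/-- An étale topological groupoid, encoded with total operations:
`mul a b` is only meaningful when `src a = rng b`. -/
structure EtaleGroupoid (G : Type u) [TopologicalSpace G] where
  mul : G → G → G
  inv : G → G
  src : G → G
  rng : G → G
  rng_mul_self : ∀ g, mul (rng g) g = g
  mul_src_self : ∀ g, mul g (src g) = g
  src_inv : ∀ g, src (inv g) = rng g
  rng_inv : ∀ g, rng (inv g) = src g
  inv_inv : ∀ g, inv (inv g) = g
  inv_mul_self : ∀ g, mul (inv g) g = src g
  mul_inv_self : ∀ g, mul g (inv g) = rng g
  mul_assoc' : ∀ a b c, src a = rng b → src b = rng c →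
    mul (mul a b) c = mul a (mul b c)
  src_mul : ∀ a b, src a = rng b → src (mul a b) = src b
  rng_mul : ∀ a b, src a = rng b → rng (mul a b) = rng a
  continuous_inv : Continuous inv
  continuousOn_mul :
    ContinuousOn (fun p : G × G => mul p.1 p.2) {p : G × G | src p.1 = rng p.2}
  isLocalHomeomorph_src : IsLocalHomeomorph src

namespace EtaleGroupoid

variable {G : Type u} [TopologicalSpace G] (𝒢 : EtaleGroupoid G)

/-- The unit space `G⁽⁰⁾`. -/
def unitSpace : Set G := Set.range 𝒢.src

/-- The isotropy bundle `Iso(G) = {γ : r γ = s γ}`. -/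
def iso : Set G := {g | 𝒢.rng g = 𝒢.src g}

/-- The isotropy group `Gᵤᵘ` at a unit `u`. -/
def isoAt (u : G) : Set G := {g | 𝒢.rng g = u ∧ 𝒢.src g = u}

/-- `U` is a bisection: `src` and `rng` are injective on `U`. -/
def IsBisection (U : Set G) : Prop := Set.InjOn 𝒢.src U ∧ Set.InjOn 𝒢.rng U

/-- `U` is a compact open bisection. -/
def IsCOB (U : Set G) : Prop := IsCompact U ∧ IsOpen U ∧ 𝒢.IsBisection U

/-- Pointwise inverse of a set. -/
def setInv (U : Set G) : Set G := 𝒢.inv '' U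

/-- Pointwise product of two sets (only composable products). -/
def setMul (U V : Set G) : Set G :=
  {g | ∃ a ∈ U, ∃ b ∈ V, 𝒢.src a = 𝒢.rng b ∧ g = 𝒢.mul a b}

/-- `H` is a subgroupoid of `G`. -/
def IsSubgroupoid (H : Set G) : Prop :=
  (∀ a ∈ H, 𝒢.inv a ∈ H) ∧
  (∀ a ∈ H, ∀ b ∈ H, 𝒢.src a = 𝒢.rng b → 𝒢.mul a b ∈ H) ∧
  (∀ a ∈ H, 𝒢.src a ∈ H)

/-- The groupoid is effective: the interior of the isotropy is the unit space. -/
def Effective : Prop := interior 𝒢.iso = 𝒢.unitSpace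

/-- A continuous (i.e. locally constant) `Rˣ`-valued 2-cocycle on `G`. -/
def IsCocycle {R : Type w} [CommRing R] (c : G → G → Rˣ) : Prop :=
  IsLocallyConstant (fun p : {p : G × G // 𝒢.src p.1 = 𝒢.rng p.2} => c p.1.1 p.1.2) ∧
  (∀ a b d, 𝒢.src a = 𝒢.rng b → 𝒢.src b = 𝒢.rng d →
    c a b * c (𝒢.mul a b) d = c b d * c a (𝒢.mul b d)) ∧
  (∀ g, c (𝒢.rng g) g = 1 ∧ c g (𝒢.src g) = 1)

/-- Membership in the (cocycle-twisted) Steinberg algebra `A_R(G)`: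
locally constant, compactly supported functions `G → R`. -/
def MemSt {R : Type w} [CommRing R] (f : G → R) : Prop :=
  IsLocallyConstant f ∧ ∃ K : Set G, IsCompact K ∧ Function.support f ⊆ K

/-- Convolution on `A_R(G;σ)` twisted by a 2-cocycle `c`. -/
noncomputable def convC {R : Type w} [CommRing R] (c : G → G → Rˣ) (f g : G → R) :
    G → R := fun γ =>
  ∑ᶠ p : G × G,
    if 𝒢.src p.1 = 𝒢.rng p.2 ∧ 𝒢.mul p.1 p.2 = γ then
      (c p.1 p.2 : R) * f p.1 * g p.2 else 0

/-- A continuous `Γ`-grading on `G` (for a discrete group `Γ`). -/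
def IsGrading {Γ : Type*} [Group Γ] (c : G → Γ) : Prop :=
  IsLocallyConstant c ∧ ∀ a b, 𝒢.src a = 𝒢.rng b → c (𝒢.mul a b) = c a * c b

end EtaleGroupoid

/-- An ample groupoid: étale with a basis of compact open bisections. -/
structure AmpleGroupoid (G : Type u) [TopologicalSpace G] extends EtaleGroupoid G where
  ample : TopologicalSpace.IsTopologicalBasis {U : Set G | toEtaleGroupoid.IsCOB U}

/-- A discrete twist `G⁽⁰⁾ × Rˣ → Σ → G` over an ample groupoid `G`. -/
structure DiscreteTwist (R : Type w) [CommRing R] {G : Type u} {S : Type v}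
    [TopologicalSpace G] [TopologicalSpace S]
    (𝒢 : AmpleGroupoid G) (𝒮 : EtaleGroupoid S) where
  i : G → Rˣ → S
  q : S → G
  continuousOn_i : ∀ t : Rˣ, ContinuousOn (fun x => i x t) 𝒢.unitSpace
  continuous_q : Continuous q
  i_injOn : Set.InjOn (fun p : G × Rˣ => i p.1 p.2) (𝒢.unitSpace ×ˢ (Set.univ : Set Rˣ))
  q_surj : Function.Surjective q
  exact' : ∀ x ∈ 𝒢.unitSpace, q ⁻¹' {x} = {σ | ∃ t : Rˣ, σ = i x t}
  i_mul : ∀ x ∈ 𝒢.unitSpace, ∀ s t : Rˣ, 𝒮.mul (i x s) (i x t) = i x (s * t)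
  unit_eq : 𝒮.unitSpace = (fun x => i x 1) '' 𝒢.unitSpace
  q_mul : ∀ a b, 𝒮.src a = 𝒮.rng b → q (𝒮.mul a b) = 𝒢.mul (q a) (q b)
  q_inv : ∀ a, q (𝒮.inv a) = 𝒢.inv (q a)
  q_src : ∀ a, q (𝒮.src a) = 𝒢.src (q a)
  q_rng : ∀ a, q (𝒮.rng a) = 𝒢.rng (q a)
  q_unit_bij : Set.BijOn q 𝒮.unitSpace 𝒢.unitSpace
  central : ∀ (σ : S) (t : Rˣ),
    𝒮.mul (i (𝒢.rng (q σ)) t) σ = 𝒮.mul σ (i (𝒢.src (q σ)) t)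
  loc_triv : ∀ α : G, ∃ B : Set G, IsOpen B ∧ α ∈ B ∧ 𝒢.IsBisection B ∧
    ∃ P : G → S, ContinuousOn P B ∧ (∀ β ∈ B, q (P β) = β) ∧
      (∀ t : Rˣ, ContinuousOn (fun β => 𝒮.mul (i (𝒢.rng β) t) (P β)) B) ∧
      (∀ σ : S, q σ ∈ B →
        ∃! p : G × Rˣ, p.1 ∈ B ∧ 𝒮.mul (i (𝒢.rng p.1) p.2) (P p.1) = σ) ∧
      (∀ t : Rˣ, ∀ V ⊆ B, IsOpen V →
        IsOpen ((fun β => 𝒮.mul (i (𝒢.rng β) t) (P β)) '' V))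

namespace DiscreteTwist

variable {R : Type w} [CommRing R] {G : Type u} {S : Type v}
  [TopologicalSpace G] [TopologicalSpace S]
  {𝒢 : AmpleGroupoid G} {𝒮 : EtaleGroupoid S} (T : DiscreteTwist R 𝒢 𝒮)

/-- The action of `Rˣ` on `Σ`: `t • σ = i(r σ, t) σ`. -/
def act (t : Rˣ) (σ : S) : S := 𝒮.mul (T.i (𝒢.rng (T.q σ)) t) σ

/-- The function `1̃_X` associated to a subset `X ⊆ Σ`. -/
noncomputable def tilde (X : Set S) : S → R := fun σ =>
  if h : ∃ t : Rˣ, σ ∈ T.act t '' X then (((Classical.choose h)⁻¹ : Rˣ) : R) else 0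

/-- Membership in the twisted Steinberg algebra `A_R(G;Σ)`: locally constant,
`Rˣ`-contravariant functions with compact image of the support in `G`. -/
def MemA (f : S → R) : Prop :=
  IsLocallyConstant f ∧
  (∀ (t : Rˣ) (σ : S), f (T.act t σ) = ((t⁻¹ : Rˣ) : R) * f σ) ∧
  IsCompact (T.q '' Function.support f)

/-- A (not necessarily continuous) section of `q`. -/
noncomputable def sec : G → S := Function.surjInv T.q_surj

/-- Convolution on `A_R(G;Σ)`, defined via the section `sec`. -/
noncomputable def conv (f g : S → R) : S → R := fun σ =>
  ∑ᶠ α : G,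
    if 𝒢.rng α = 𝒢.rng (T.q σ) then
      f (T.sec α) * g (𝒮.mul (𝒮.inv (T.sec α)) σ) else 0

end DiscreteTwist

end

noncomputable section UniquenessAux

namespace EtaleGroupoid

variable {G : Type*} [TopologicalSpace G] (𝒦 : EtaleGroupoid G)

theorem aux_src_src (g : G) : 𝒦.src (𝒦.src g) = 𝒦.src g := by
  conv_lhs => rw [← 𝒦.inv_mul_self g]
  rw [𝒦.src_mul _ _ (𝒦.src_inv g)]

theorem aux_rng_src (g : G) : 𝒦.rng (𝒦.src g) = 𝒦.src g := by
  conv_lhs => rw [← 𝒦.inv_mul_self g]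
  rw [𝒦.rng_mul _ _ (𝒦.src_inv g), 𝒦.rng_inv]

theorem aux_unit_src {u : G} (hu : u ∈ 𝒦.unitSpace) : 𝒦.src u = u := by
  obtain ⟨g, rfl⟩ := hu; exact aux_src_src 𝒦 g

theorem aux_unit_rng {u : G} (hu : u ∈ 𝒦.unitSpace) : 𝒦.rng u = u := by
  obtain ⟨g, rfl⟩ := hu; exact aux_rng_src 𝒦 g

theorem aux_unit_inv {u : G} (hu : u ∈ 𝒦.unitSpace) : 𝒦.inv u = u := by
  have h1 : 𝒦.src (𝒦.inv u) = u := by rw [𝒦.src_inv, aux_unit_rng 𝒦 hu]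
  calc 𝒦.inv u = 𝒦.mul (𝒦.inv u) (𝒦.src (𝒦.inv u)) := (𝒦.mul_src_self _).symm
  _ = 𝒦.mul (𝒦.inv u) u := by rw [h1]
  _ = 𝒦.src u := 𝒦.inv_mul_self u
  _ = u := aux_unit_src 𝒦 hu

theorem aux_rng_mem (g : G) : 𝒦.rng g ∈ 𝒦.unitSpace := ⟨𝒦.inv g, 𝒦.src_inv g⟩

theorem aux_src_mem (g : G) : 𝒦.src g ∈ 𝒦.unitSpace := ⟨g, rfl⟩

theorem aux_inv_eq (a b : G) (hc : 𝒦.src a = 𝒦.rng b) (h : 𝒦.mul a b = 𝒦.rng a) :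
    b = 𝒦.inv a := by
  calc b = 𝒦.mul (𝒦.src a) b := by rw [hc, 𝒦.rng_mul_self]
  _ = 𝒦.mul (𝒦.mul (𝒦.inv a) a) b := by rw [𝒦.inv_mul_self]
  _ = 𝒦.mul (𝒦.inv a) (𝒦.mul a b) := 𝒦.mul_assoc' _ _ _ (by rw [𝒦.src_inv]) hc
  _ = 𝒦.mul (𝒦.inv a) (𝒦.rng a) := by rw [h]
  _ = 𝒦.mul (𝒦.inv a) (𝒦.src (𝒦.inv a)) := by rw [𝒦.src_inv]
  _ = 𝒦.inv a := 𝒦.mul_src_self _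

theorem aux_continuous_src : Continuous 𝒦.src := 𝒦.isLocalHomeomorph_src.continuous

theorem aux_openMap_src : IsOpenMap 𝒦.src := 𝒦.isLocalHomeomorph_src.isOpenMap

theorem aux_openMap_inv : IsOpenMap 𝒦.inv := by
  intro O hO
  have himg : 𝒦.inv '' O = 𝒦.inv ⁻¹' O := by
    ext g
    constructor
    · rintro ⟨a, ha, rfl⟩; simpa [𝒦.inv_inv] using ha
    · intro hg; exact ⟨𝒦.inv g, hg, 𝒦.inv_inv g⟩
  rw [himg]; exact hO.preimage 𝒦.continuous_inv

theorem aux_rng_eq_comp : 𝒦.rng = fun g => 𝒦.src (𝒦.inv g) :=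
  funext fun g => (𝒦.src_inv g).symm

theorem aux_continuous_rng : Continuous 𝒦.rng := by
  rw [aux_rng_eq_comp]; exact (aux_continuous_src 𝒦).comp 𝒦.continuous_inv

theorem aux_openMap_rng : IsOpenMap 𝒦.rng := by
  rw [aux_rng_eq_comp]; exact (aux_openMap_src 𝒦).comp (aux_openMap_inv 𝒦)

theorem aux_open_unitSpace : IsOpen 𝒦.unitSpace := (aux_openMap_src 𝒦).isOpen_range

end EtaleGroupoid

namespace DiscreteTwist

open EtaleGroupoid

variable {R : Type w} [CommRing R] {G : Type u} {S : Type v}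
  [TopologicalSpace G] [TopologicalSpace S]
  {𝒢 : AmpleGroupoid G} {𝒮 : EtaleGroupoid S} (T : DiscreteTwist R 𝒢 𝒮)

theorem aux_q_i {x : G} (hx : x ∈ 𝒢.unitSpace) (t : Rˣ) : T.q (T.i x t) = x := by
  have h : T.i x t ∈ T.q ⁻¹' {x} := by
    rw [T.exact' x hx]; exact ⟨t, rfl⟩
  simpa using h

theorem aux_i_mem_unit {x : G} (hx : x ∈ 𝒢.unitSpace) : T.i x 1 ∈ 𝒮.unitSpace := by
  rw [T.unit_eq]; exact ⟨x, hx, rfl⟩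

theorem aux_unit_over {σ : S} {x : G} (hσ : σ ∈ 𝒮.unitSpace) (hx : x ∈ 𝒢.unitSpace)
    (hq : T.q σ = x) : σ = T.i x 1 :=
  T.q_unit_bij.injOn hσ (aux_i_mem_unit T hx) (by rw [hq, aux_q_i T hx])

theorem aux_Srng (σ : S) : 𝒮.rng σ = T.i (𝒢.rng (T.q σ)) 1 :=
  aux_unit_over T (aux_rng_mem 𝒮 σ) (aux_rng_mem 𝒢.toEtaleGroupoid (T.q σ)) (T.q_rng σ)

theorem aux_Ssrc (σ : S) : 𝒮.src σ = T.i (𝒢.src (T.q σ)) 1 :=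
  aux_unit_over T (aux_src_mem 𝒮 σ) (aux_src_mem 𝒢.toEtaleGroupoid (T.q σ)) (T.q_src σ)

theorem aux_comp {a b : S} (h : 𝒢.src (T.q a) = 𝒢.rng (T.q b)) : 𝒮.src a = 𝒮.rng b := by
  rw [aux_Ssrc T, aux_Srng T, h]

theorem aux_qcomp {a b : S} (h : 𝒮.src a = 𝒮.rng b) : 𝒢.src (T.q a) = 𝒢.rng (T.q b) := by
  rw [← T.q_src, ← T.q_rng, h]

theorem aux_src_i {x : G} (hx : x ∈ 𝒢.unitSpace) (t : Rˣ) :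
    𝒮.src (T.i x t) = T.i x 1 := by
  rw [aux_Ssrc T, aux_q_i T hx, aux_unit_src _ hx]

theorem aux_rng_i {x : G} (hx : x ∈ 𝒢.unitSpace) (t : Rˣ) :
    𝒮.rng (T.i x t) = T.i x 1 := by
  rw [aux_Srng T, aux_q_i T hx, aux_unit_rng _ hx]

theorem aux_comp_i_act (t : Rˣ) (σ : S) :
    𝒮.src (T.i (𝒢.rng (T.q σ)) t) = 𝒮.rng σ := by
  rw [aux_src_i T (aux_rng_mem _ _), aux_Srng T]

theorem aux_act_def (t : Rˣ) (σ : S) :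
    T.act t σ = 𝒮.mul (T.i (𝒢.rng (T.q σ)) t) σ := rfl

theorem aux_q_act (t : Rˣ) (σ : S) : T.q (T.act t σ) = T.q σ := by
  rw [aux_act_def T, T.q_mul _ _ (aux_comp_i_act T t σ), aux_q_i T (aux_rng_mem _ _),
    𝒢.rng_mul_self]

theorem aux_rng_act (t : Rˣ) (σ : S) : 𝒮.rng (T.act t σ) = 𝒮.rng σ := by
  rw [aux_act_def T, 𝒮.rng_mul _ _ (aux_comp_i_act T t σ), aux_rng_i T (aux_rng_mem _ _)]
  exact (aux_Srng T σ).symm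

theorem aux_src_act (t : Rˣ) (σ : S) : 𝒮.src (T.act t σ) = 𝒮.src σ := by
  rw [aux_act_def T, 𝒮.src_mul _ _ (aux_comp_i_act T t σ)]

theorem aux_act_one (σ : S) : T.act 1 σ = σ := by
  rw [aux_act_def T, ← aux_Srng T, 𝒮.rng_mul_self]

theorem aux_act_act (t s : Rˣ) (σ : S) : T.act t (T.act s σ) = T.act (t * s) σ := by
  have hx : 𝒢.rng (T.q σ) ∈ 𝒢.unitSpace := aux_rng_mem _ _
  have h1 : 𝒮.src (T.i (𝒢.rng (T.q σ)) t) = 𝒮.rng (T.i (𝒢.rng (T.q σ)) s) := by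
    rw [aux_src_i T hx, aux_rng_i T hx]
  rw [aux_act_def T t, aux_q_act, aux_act_def T s, aux_act_def T (t*s),
    ← 𝒮.mul_assoc' _ _ _ h1 (aux_comp_i_act T s σ), T.i_mul _ hx t s]

theorem aux_act_cancel {t : Rˣ} {σ τ : S} (h : T.act t σ = T.act t τ) : σ = τ := by
  have h2 := congrArg (T.act t⁻¹) h
  rwa [aux_act_act, aux_act_act, inv_mul_cancel, aux_act_one, aux_act_one] at h2

theorem aux_act_faithful {s : Rˣ} {σ : S} (h : T.act s σ = σ) : s = 1 := by
  set x := 𝒢.rng (T.q σ) with hxdef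
  have hx : x ∈ 𝒢.unitSpace := aux_rng_mem _ _
  have hL : 𝒮.mul (T.act s σ) (𝒮.inv σ) = T.i x s := by
    rw [aux_act_def T, 𝒮.mul_assoc' _ _ _ (aux_comp_i_act T s σ) (by rw [𝒮.rng_inv]),
      𝒮.mul_inv_self, aux_Srng T, T.i_mul _ hx s 1, mul_one]
  have h2 : T.i x s = 𝒮.rng σ := by rw [← hL, h, 𝒮.mul_inv_self]
  rw [aux_Srng T σ] at h2
  have h3 : ((x, s) : G × Rˣ) = (x, 1) :=
    T.i_injOn ⟨hx, Set.mem_univ _⟩ ⟨hx, Set.mem_univ _⟩ h2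
  exact (Prod.ext_iff.mp h3).2

theorem aux_fiber {τ σ : S} (h : T.q τ = T.q σ) : ∃ t : Rˣ, τ = T.act t σ := by
  obtain ⟨B, hBo, hBm, hbis, P, hPc, hPq, hgc, huniq, hopen⟩ := T.loc_triv (T.q σ)
  obtain ⟨⟨β₁, t₁⟩, ⟨hβ₁, he₁⟩, -⟩ := huniq σ hBm
  obtain ⟨⟨β₂, t₂⟩, ⟨hβ₂, he₂⟩, -⟩ := huniq τ (by rwa [h])
  have hq1 : T.q (P β₁) = β₁ := hPq β₁ hβ₁
  have hq2 : T.q (P β₂) = β₂ := hPq β₂ hβ₂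
  have he₁' : T.act t₁ (P β₁) = σ := by rw [aux_act_def T, hq1]; exact he₁
  have he₂' : T.act t₂ (P β₂) = τ := by rw [aux_act_def T, hq2]; exact he₂
  have hb1 : β₁ = T.q σ := by rw [← he₁', aux_q_act, hq1]
  have hb2 : β₂ = T.q σ := by rw [← h, ← he₂', aux_q_act, hq2]
  have hbb : β₂ = β₁ := by rw [hb1, hb2]
  refine ⟨t₂ * t₁⁻¹, ?_⟩
  rw [← he₂', ← he₁', hbb, aux_act_act, mul_assoc, inv_mul_cancel, mul_one]

theorem aux_act_mul (t : Rˣ) {a b : S} (h : 𝒮.src a = 𝒮.rng b) :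
    T.act t (𝒮.mul a b) = 𝒮.mul (T.act t a) b := by
  have hGc : 𝒢.src (T.q a) = 𝒢.rng (T.q b) := aux_qcomp T h
  rw [aux_act_def T, aux_act_def T, T.q_mul a b h, 𝒢.rng_mul _ _ hGc]
  exact (𝒮.mul_assoc' _ a b (aux_comp_i_act T t a) h).symm

theorem aux_mul_act (t : Rˣ) {a b : S} (h : 𝒮.src a = 𝒮.rng b) :
    𝒮.mul a (T.act t b) = T.act t (𝒮.mul a b) := by
  have hGc : 𝒢.src (T.q a) = 𝒢.rng (T.q b) := aux_qcomp T h
  have hy : 𝒢.src (T.q a) ∈ 𝒢.unitSpace := aux_src_mem _ _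
  have h1 : 𝒮.src a = 𝒮.rng (T.i (𝒢.src (T.q a)) t) := by
    rw [aux_rng_i T hy, aux_Ssrc T]
  calc 𝒮.mul a (T.act t b)
      = 𝒮.mul a (𝒮.mul (T.i (𝒢.src (T.q a)) t) b) := by rw [aux_act_def T, ← hGc]
    _ = 𝒮.mul (𝒮.mul a (T.i (𝒢.src (T.q a)) t)) b := by
        rw [𝒮.mul_assoc' _ _ _ h1 (by rw [aux_src_i T hy, ← aux_Ssrc T, h])]
    _ = 𝒮.mul (T.act t a) b := by rw [← T.central a t, aux_act_def T]
    _ = T.act t (𝒮.mul a b) := (aux_act_mul T t h).symm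

theorem aux_inv_act (t : Rˣ) (σ : S) : 𝒮.inv (T.act t σ) = T.act t⁻¹ (𝒮.inv σ) := by
  have hcomp : 𝒮.src (T.act t σ) = 𝒮.rng (T.act t⁻¹ (𝒮.inv σ)) := by
    rw [aux_src_act, aux_rng_act, 𝒮.rng_inv]
  have hsr : 𝒮.src σ = 𝒮.rng (𝒮.inv σ) := by rw [𝒮.rng_inv]
  have hmule : 𝒮.mul (T.act t σ) (T.act t⁻¹ (𝒮.inv σ)) = 𝒮.rng (T.act t σ) := by
    calc 𝒮.mul (T.act t σ) (T.act t⁻¹ (𝒮.inv σ))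
        = T.act t⁻¹ (𝒮.mul (T.act t σ) (𝒮.inv σ)) :=
          aux_mul_act T t⁻¹ (by rw [aux_src_act, 𝒮.rng_inv])
      _ = T.act t⁻¹ (T.act t (𝒮.mul σ (𝒮.inv σ))) := by rw [aux_act_mul T t hsr]
      _ = T.act (t⁻¹ * t) (𝒮.rng σ) := by rw [aux_act_act, 𝒮.mul_inv_self]
      _ = 𝒮.rng (T.act t σ) := by rw [inv_mul_cancel, aux_act_one, aux_rng_act]
  exact (aux_inv_eq 𝒮 _ _ hcomp hmule).symm

theorem aux_q_sec (α : G) : T.q (T.sec α) = α := Function.surjInv_eq T.q_surj α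


theorem aux_act_openMap (t : Rˣ) : IsOpenMap (T.act t) := by
  intro O hO
  refine isOpen_iff_forall_mem_open.mpr ?_
  rintro τ' ⟨σ, hσO, rfl⟩
  obtain ⟨B, hBo, hBm, hbis, P, hPc, hPq, hgc, huniq, hopenIm⟩ := T.loc_triv (T.q σ)
  have hqP : T.q (P (T.q σ)) = T.q σ := hPq _ hBm
  obtain ⟨s, hs⟩ := aux_fiber T hqP.symm
  have hact : ∀ r : Rˣ, ∀ β ∈ B, 𝒮.mul (T.i (𝒢.rng β) r) (P β) = T.act r (P β) := by
    intro r β hβ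
    rw [aux_act_def T, hPq β hβ]
  have hmem : (fun β => 𝒮.mul (T.i (𝒢.rng β) s) (P β)) (T.q σ) ∈ O := by
    show 𝒮.mul (T.i (𝒢.rng (T.q σ)) s) (P (T.q σ)) ∈ O
    rw [hact s _ hBm, ← hs]; exact hσO
  have hnb : (fun β => 𝒮.mul (T.i (𝒢.rng β) s) (P β)) ⁻¹' O ∈ nhdsWithin (T.q σ) B :=
    (hgc s (T.q σ) hBm) (hO.mem_nhds hmem)
  obtain ⟨U, hUo, hUm, hUsub⟩ := mem_nhdsWithin.mp hnb
  refine ⟨(fun β => 𝒮.mul (T.i (𝒢.rng β) (t * s)) (P β)) '' (U ∩ B), ?_,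
    hopenIm (t * s) (U ∩ B) Set.inter_subset_right (hUo.inter hBo), ?_⟩
  · rintro _ ⟨β, hβ, rfl⟩
    refine ⟨𝒮.mul (T.i (𝒢.rng β) s) (P β), hUsub hβ, ?_⟩
    show T.act t (𝒮.mul (T.i (𝒢.rng β) s) (P β)) = 𝒮.mul (T.i (𝒢.rng β) (t * s)) (P β)
    rw [hact s _ hβ.2, hact (t*s) _ hβ.2, aux_act_act]
  · refine ⟨T.q σ, ⟨hUm, hBm⟩, ?_⟩
    show 𝒮.mul (T.i (𝒢.rng (T.q σ)) (t * s)) (P (T.q σ)) = T.act t σ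
    rw [hact (t*s) _ hBm, ← aux_act_act, ← hs]

theorem aux_iso_act {t : Rˣ} {σ : S} (h : σ ∈ 𝒮.iso) : T.act t σ ∈ 𝒮.iso := by
  simp only [EtaleGroupoid.iso, Set.mem_setOf_eq] at h ⊢
  rw [aux_rng_act, aux_src_act]; exact h

theorem aux_intIso_act (t : Rˣ) {σ : S} (h : σ ∈ interior 𝒮.iso) :
    T.act t σ ∈ interior 𝒮.iso := by
  obtain ⟨O, hOsub, hOo, hσ⟩ := mem_interior.mp h
  exact mem_interior.mpr ⟨T.act t '' O, by rintro _ ⟨a, ha, rfl⟩; exact aux_iso_act T (hOsub ha),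
    aux_act_openMap T t O hOo, ⟨σ, hσ, rfl⟩⟩

/-- `Rˣ`-contravariance. -/
def Contra (f : S → R) : Prop :=
  ∀ (t : Rˣ) (σ : S), f (T.act t σ) = ((t⁻¹ : Rˣ) : R) * f σ

theorem aux_contra_ne {f : S → R} (hco : T.Contra f) (t : Rˣ) {σ : S} (h : f σ ≠ 0) :
    f (T.act t σ) ≠ 0 := by
  rw [hco t σ]
  exact fun h0 => h ((Units.mul_right_eq_zero t⁻¹).mp h0)

theorem aux_qsupp_clopen {f : S → R} (hlc : IsLocallyConstant f) (hco : T.Contra f) :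
    IsClopen (T.q '' Function.support f) := by
  constructor
  · rw [← isOpen_compl_iff]
    refine isOpen_iff_forall_mem_open.mpr ?_
    intro y hy
    obtain ⟨B, hBo, hBm, hbis, P, hPc, hPq, hgc, huniq, hopenIm⟩ := T.loc_triv y
    have hf0 : f (P y) = 0 := by
      by_contra hne
      exact hy ⟨P y, hne, hPq y hBm⟩
    refine ⟨B ∩ P ⁻¹' (f ⁻¹' {0}), ?_, hPc.isOpen_inter_preimage hBo (hlc {0}),
      ⟨hBm, by simp [hf0]⟩⟩
    rintro β ⟨hβB, hβ0⟩ ⟨σ, hσ, hqσ⟩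
    obtain ⟨r, hr⟩ := aux_fiber T (hqσ.trans (hPq β hβB).symm)
    apply hσ
    rw [hr, hco r (P β)]
    simp only [Set.mem_preimage, Set.mem_singleton_iff] at hβ0
    rw [hβ0, mul_zero]
  · refine isOpen_iff_forall_mem_open.mpr ?_
    rintro _ ⟨σ, hσ, rfl⟩
    obtain ⟨B, hBo, hBm, hbis, P, hPc, hPq, hgc, huniq, hopenIm⟩ := T.loc_triv (T.q σ)
    obtain ⟨r, hr⟩ := aux_fiber T (hPq _ hBm).symm
    have hfP : f (P (T.q σ)) ≠ 0 := by
      intro h0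
      apply hσ
      rw [hr, hco r, h0, mul_zero]
    refine ⟨B ∩ P ⁻¹' (f ⁻¹' {f (P (T.q σ))}), ?_,
      hPc.isOpen_inter_preimage hBo (hlc {f (P (T.q σ))}), ⟨hBm, by simp⟩⟩
    rintro β ⟨hβB, hβv⟩
    simp only [Set.mem_preimage, Set.mem_singleton_iff] at hβv
    exact ⟨P β, by rw [Function.mem_support, hβv]; exact hfP, hPq β hβB⟩

theorem aux_MemA_zero : T.MemA (0 : S → R) := by
  refine ⟨IsLocallyConstant.const 0, fun t σ => by simp, ?_⟩
  have hs : Function.support (0 : S → R) = ∅ := by ext x; simp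
  rw [hs, Set.image_empty]
  exact isCompact_empty

theorem aux_MemA_neg {g : S → R} (hg : T.MemA g) : T.MemA (-g) := by
  refine ⟨?_, fun t σ => by simp [hg.2.1 t σ, mul_comm], ?_⟩
  · have := hg.1.comp (fun x : R => -x)
    exact this
  · have hs : Function.support (-g) = Function.support g := by ext x; simp
    rw [hs]
    exact hg.2.2

theorem aux_MemA_add {f g : S → R} (hf : T.MemA f) (hg : T.MemA g) : T.MemA (f + g) := by
  have hlc : IsLocallyConstant (f + g) := by
    rw [IsLocallyConstant.iff_exists_open]
    intro σ
    obtain ⟨U, hUo, hUm, hU⟩ := (IsLocallyConstant.iff_exists_open f).mp hf.1 σ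
    obtain ⟨V, hVo, hVm, hV⟩ := (IsLocallyConstant.iff_exists_open g).mp hg.1 σ
    exact ⟨U ∩ V, hUo.inter hVo, ⟨hUm, hVm⟩,
      fun x hx => by simp only [Pi.add_apply, hU x hx.1, hV x hx.2]⟩
  have hco : T.Contra (f + g) := fun t σ => by
    simp only [Pi.add_apply, hf.2.1 t σ, hg.2.1 t σ, mul_add]
  refine ⟨hlc, hco, ?_⟩
  apply IsCompact.of_isClosed_subset (hf.2.2.union hg.2.2)
    (aux_qsupp_clopen T hlc hco).isClosed
  rw [← Set.image_union]
  exact Set.image_mono (Function.support_add _ _)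


set_option linter.unusedSectionVars false

variable [T2Space G] [T2Space S]

theorem aux_setMul_compact {C D : Set G} (hC : IsCompact C) (hD : IsCompact D) :
    IsCompact (𝒢.setMul C D) := by
  have heq : 𝒢.setMul C D =
      (fun p : G × G => 𝒢.mul p.1 p.2) '' ((C ×ˢ D) ∩ {p | 𝒢.src p.1 = 𝒢.rng p.2}) := by
    ext g
    constructor
    · rintro ⟨a, ha, b, hb, hc, rfl⟩; exact ⟨(a, b), ⟨⟨ha, hb⟩, hc⟩, rfl⟩
    · rintro ⟨⟨a, b⟩, ⟨⟨ha, hb⟩, hc⟩, rfl⟩; exact ⟨a, ha, b, hb, hc, rfl⟩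
  rw [heq]
  have hclosed : IsClosed {p : G × G | 𝒢.src p.1 = 𝒢.rng p.2} :=
    isClosed_eq ((aux_continuous_src 𝒢.toEtaleGroupoid).comp continuous_fst)
      ((aux_continuous_rng 𝒢.toEtaleGroupoid).comp continuous_snd)
  exact ((hC.prod hD).inter_right hclosed).image_of_continuousOn
    (𝒢.continuousOn_mul.mono Set.inter_subset_right)

theorem aux_invOn_cont {B : Set G} [Nonempty G] (hBo : IsOpen B)
    (hBinj : Set.InjOn 𝒢.rng B) :
    ContinuousOn (Function.invFunOn 𝒢.rng B) (𝒢.rng '' B) := by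
  have hmem : ∀ y ∈ 𝒢.rng '' B, Function.invFunOn 𝒢.rng B y ∈ B ∧
      𝒢.rng (Function.invFunOn 𝒢.rng B y) = y := by
    rintro y ⟨β, hβ, rfl⟩
    exact ⟨Function.invFunOn_mem ⟨β, hβ, rfl⟩, Function.invFunOn_eq ⟨β, hβ, rfl⟩⟩
  rw [continuousOn_iff]
  intro y hy t hto hρy
  refine ⟨𝒢.rng '' (t ∩ B), aux_openMap_rng 𝒢.toEtaleGroupoid _ (hto.inter hBo), ?_, ?_⟩
  · exact ⟨Function.invFunOn 𝒢.rng B y, ⟨hρy, (hmem y hy).1⟩, (hmem y hy).2⟩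
  · rintro y' ⟨⟨β', hβ't, rfl⟩, -⟩
    have h1 := hmem _ ⟨β', hβ't.2, rfl⟩
    have h2 : Function.invFunOn 𝒢.rng B (𝒢.rng β') = β' := hBinj h1.1 hβ't.2 h1.2
    simpa [h2] using hβ't.1

section Theta

variable (B : Set G) (L : G → S)

/-- The basis function of the twisted Steinberg algebra supported on the
`Rˣ`-orbit of `L '' B`. -/
noncomputable def theta : S → R := fun τ =>
  if h : ∃ p : G × Rˣ, p.1 ∈ B ∧ τ = T.act p.2 (L p.1) then
    (((Classical.choose h).2⁻¹ : Rˣ) : R) else 0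

/-- Left translation of `g` by the section `L` over `B`. -/
noncomputable def transl (g : S → R) : S → R := fun σ =>
  if h : ∃ β, β ∈ B ∧ 𝒢.rng β = 𝒢.rng (T.q σ) then
    g (𝒮.mul (𝒮.inv (L (Classical.choose h))) σ) else 0

variable {B L}

theorem theta_val (hLq : ∀ β ∈ B, T.q (L β) = β) {β : G} (hβ : β ∈ B) (t : Rˣ) :
    T.theta B L (T.act t (L β)) = ((t⁻¹ : Rˣ) : R) := by
  have hex : ∃ p : G × Rˣ, p.1 ∈ B ∧ T.act t (L β) = T.act p.2 (L p.1) := ⟨(β, t), hβ, rfl⟩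
  simp only [theta, dif_pos hex]
  obtain ⟨h1, h2⟩ := Classical.choose_spec hex
  have hqq : (Classical.choose hex).1 = β := by
    have h3 := congrArg T.q h2
    rw [aux_q_act, aux_q_act, hLq _ hβ, hLq _ h1] at h3
    exact h3.symm
  rw [hqq] at h2
  have h4 := congrArg (T.act ((Classical.choose hex).2)⁻¹) h2
  rw [aux_act_act, aux_act_act, inv_mul_cancel, aux_act_one] at h4
  have h5 : (Classical.choose hex).2 = t := inv_mul_eq_one.mp (aux_act_faithful T h4)
  rw [h5]

theorem theta_ne {τ : S} (h : T.theta B L τ ≠ 0) :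
    ∃ p : G × Rˣ, p.1 ∈ B ∧ τ = T.act p.2 (L p.1) := by
  by_contra hne
  exact h (by simp only [theta, dif_neg hne])

theorem theta_q_mem (hLq : ∀ β ∈ B, T.q (L β) = β) {τ : S} (h : T.theta B L τ ≠ 0) :
    T.q τ ∈ B := by
  obtain ⟨p, hp, he⟩ := theta_ne T h
  rw [he, aux_q_act, hLq _ hp]
  exact hp

theorem theta_contra (hLq : ∀ β ∈ B, T.q (L β) = β) : T.Contra (T.theta B L) := by
  intro t σ
  by_cases hex : ∃ p : G × Rˣ, p.1 ∈ B ∧ σ = T.act p.2 (L p.1)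
  · obtain ⟨⟨β, s⟩, hβ, rfl⟩ := hex
    rw [aux_act_act, theta_val T hLq hβ (t * s), theta_val T hLq hβ s]
    rw [mul_inv_rev, mul_comm s⁻¹ t⁻¹, Units.val_mul]
  · have hex2 : ¬∃ p : G × Rˣ, p.1 ∈ B ∧ T.act t σ = T.act p.2 (L p.1) := by
      rintro ⟨p, hp, he⟩
      exact hex ⟨(p.1, t⁻¹ * p.2), hp, by
        rw [← aux_act_act, ← he, aux_act_act, inv_mul_cancel, aux_act_one]⟩
    simp only [theta, dif_neg hex, dif_neg hex2, mul_zero]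

theorem theta_locConst (hBc : IsCompact B) (hBo : IsOpen B)
    (hLq : ∀ β ∈ B, T.q (L β) = β) (hLc : ContinuousOn L B) :
    IsLocallyConstant (T.theta B L) := by
  rw [IsLocallyConstant.iff_exists_open]
  intro τ
  have hzero : ∀ {ρ : S}, T.q ρ ∉ B → T.theta B L ρ = 0 := by
    intro ρ hρ
    by_contra h0
    exact hρ (theta_q_mem T hLq h0)
  by_cases hmem : T.q τ ∈ B
  · obtain ⟨B₂, hB₂o, hB₂m, hbis₂, P, hPc, hPq, hgc, huniq, hopenIm⟩ := T.loc_triv (T.q τ)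
    have hq1 : T.q (P (T.q τ)) = T.q τ := hPq _ hB₂m
    have hq2 : T.q (L (T.q τ)) = T.q τ := hLq _ hmem
    obtain ⟨ra, hra⟩ := aux_fiber T (hq2.trans hq1.symm)
    obtain ⟨t, ht⟩ := aux_fiber T hq2.symm
    have hactP : ∀ r : Rˣ, ∀ β ∈ B₂, 𝒮.mul (T.i (𝒢.rng β) r) (P β) = T.act r (P β) := by
      intro r β hβ
      rw [aux_act_def T, hPq β hβ]
    set Wra := (fun β => 𝒮.mul (T.i (𝒢.rng β) ra) (P β)) '' B₂ with hWdef
    have hWo : IsOpen Wra := hopenIm ra B₂ subset_rfl hB₂o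
    set V := (B ∩ L ⁻¹' Wra) ∩ B₂ with hVdef
    have hVo : IsOpen V := (hLc.isOpen_inter_preimage hBo hWo).inter hB₂o
    have hτV : T.q τ ∈ V := by
      refine ⟨⟨hmem, ⟨T.q τ, hB₂m, ?_⟩⟩, hB₂m⟩
      show 𝒮.mul (T.i (𝒢.rng (T.q τ)) ra) (P (T.q τ)) = L (T.q τ)
      rw [hactP ra _ hB₂m]
      exact hra.symm
    have hkey : ∀ β ∈ V, L β = T.act ra (P β) := by
      rintro β ⟨⟨hβB, hβW⟩, hβB₂⟩
      obtain ⟨β', hβ', he0⟩ := hβW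
      have he : 𝒮.mul (T.i (𝒢.rng β') ra) (P β') = L β := he0
      rw [hactP ra _ hβ'] at he
      have hββ : β' = β := by
        have h5 := congrArg T.q he
        rw [aux_q_act, hPq _ hβ', hLq _ hβB] at h5
        exact h5
      rw [← he, hββ]
    refine ⟨(fun β => 𝒮.mul (T.i (𝒢.rng β) (t * ra)) (P β)) '' V,
      hopenIm (t * ra) V (fun β hβ => hβ.2) hVo, ?_, ?_⟩
    · refine ⟨T.q τ, hτV, ?_⟩
      show 𝒮.mul (T.i (𝒢.rng (T.q τ)) (t * ra)) (P (T.q τ)) = τ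
      rw [hactP (t * ra) _ hB₂m, ← aux_act_act, ← hra, ← ht]
    · rintro τ' ⟨β, hβV, rfl⟩
      show T.theta B L (𝒮.mul (T.i (𝒢.rng β) (t * ra)) (P β)) = T.theta B L τ
      rw [hactP (t * ra) _ hβV.2, ← aux_act_act, ← hkey β hβV,
        theta_val T hLq hβV.1.1 t, ht, theta_val T hLq hmem t]
  · refine ⟨T.q ⁻¹' Bᶜ, (hBc.isClosed.isOpen_compl).preimage T.continuous_q, hmem, ?_⟩
    intro τ' hτ'
    rw [hzero hτ', hzero hmem]

theorem theta_MemA (hBc : IsCompact B) (hBo : IsOpen B)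
    (hLq : ∀ β ∈ B, T.q (L β) = β) (hLc : ContinuousOn L B) :
    T.MemA (T.theta B L) := by
  refine ⟨theta_locConst T hBc hBo hLq hLc, theta_contra T hLq, ?_⟩
  refine IsCompact.of_isClosed_subset hBc
    (aux_qsupp_clopen T (theta_locConst T hBc hBo hLq hLc) (theta_contra T hLq)).isClosed ?_
  rintro _ ⟨τ, hτ, rfl⟩
  exact theta_q_mem T hLq hτ

theorem transl_val (hBinj : Set.InjOn 𝒢.rng B) {β : G} {σ : S} (hβ : β ∈ B)
    (hr : 𝒢.rng β = 𝒢.rng (T.q σ)) (g : S → R) :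
    T.transl B L g σ = g (𝒮.mul (𝒮.inv (L β)) σ) := by
  have hex : ∃ b, b ∈ B ∧ 𝒢.rng b = 𝒢.rng (T.q σ) := ⟨β, hβ, hr⟩
  simp only [transl, dif_pos hex]
  have heq : Classical.choose hex = β :=
    hBinj (Classical.choose_spec hex).1 hβ ((Classical.choose_spec hex).2.trans hr.symm)
  rw [heq]

theorem transl_zero {σ : S} (h : 𝒢.rng (T.q σ) ∉ 𝒢.rng '' B) (g : S → R) :
    T.transl B L g σ = 0 := by
  have hne : ¬∃ b, b ∈ B ∧ 𝒢.rng b = 𝒢.rng (T.q σ) := by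
    rintro ⟨b, hb, hrb⟩; exact h ⟨b, hb, hrb⟩
  simp only [transl, dif_neg hne]

theorem aux_comp_invL (hLq : ∀ β ∈ B, T.q (L β) = β) {β : G} {σ : S} (hβ : β ∈ B)
    (hr : 𝒢.rng β = 𝒢.rng (T.q σ)) : 𝒮.src (𝒮.inv (L β)) = 𝒮.rng σ := by
  rw [𝒮.src_inv, aux_Srng T (L β), hLq β hβ, hr, ← aux_Srng T σ]

theorem conv_theta (hBinj : Set.InjOn 𝒢.rng B) (hLq : ∀ β ∈ B, T.q (L β) = β)
    {g : S → R} (hg : T.Contra g) :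
    T.conv (T.theta B L) g = T.transl B L g := by
  funext σ
  have hconv : T.conv (T.theta B L) g σ =
      ∑ᶠ α, if 𝒢.rng α = 𝒢.rng (T.q σ) then
        T.theta B L (T.sec α) * g (𝒮.mul (𝒮.inv (T.sec α)) σ) else 0 := rfl
  by_cases hex : ∃ β, β ∈ B ∧ 𝒢.rng β = 𝒢.rng (T.q σ)
  · obtain ⟨β, hβ, hrβ⟩ := hex
    rw [transl_val T hBinj hβ hrβ g, hconv]
    rw [finsum_eq_single _ β ?_]
    · obtain ⟨s, hs⟩ := aux_fiber T ((aux_q_sec T β).trans (hLq β hβ).symm)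
      rw [if_pos hrβ, hs, theta_val T hLq hβ s]
      have hcomp : 𝒮.src (𝒮.inv (L β)) = 𝒮.rng σ := aux_comp_invL T hLq hβ hrβ
      have hmm : 𝒮.mul (𝒮.inv (T.act s (L β))) σ = T.act s⁻¹ (𝒮.mul (𝒮.inv (L β)) σ) := by
        rw [aux_inv_act]
        exact (aux_act_mul T s⁻¹ hcomp).symm
      rw [hmm, hg s⁻¹ _, ← mul_assoc, ← Units.val_mul, mul_inv_cancel, Units.val_one, one_mul]
    · intro α hαβ
      by_cases hr : 𝒢.rng α = 𝒢.rng (T.q σ)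
      · rw [if_pos hr]
        have hθ0 : T.theta B L (T.sec α) = 0 := by
          by_contra h0
          obtain ⟨p, hp, he⟩ := theta_ne T h0
          have hα : α = p.1 := by rw [← aux_q_sec T α, he, aux_q_act, hLq _ hp]
          exact hαβ (by
            rw [hα] at hr ⊢
            exact hBinj hp hβ (hr.trans hrβ.symm))
        rw [hθ0, zero_mul]
      · rw [if_neg hr]
  · have h2 : 𝒢.rng (T.q σ) ∉ 𝒢.rng '' B := by
      rintro ⟨b, hb, hrb⟩; exact hex ⟨b, hb, hrb⟩
    rw [transl_zero T h2 g, hconv]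
    apply finsum_eq_zero_of_forall_eq_zero
    intro α
    by_cases hr : 𝒢.rng α = 𝒢.rng (T.q σ)
    · rw [if_pos hr]
      have hθ0 : T.theta B L (T.sec α) = 0 := by
        by_contra h0
        obtain ⟨p, hp, he⟩ := theta_ne T h0
        have hα : α = p.1 := by rw [← aux_q_sec T α, he, aux_q_act, hLq _ hp]
        exact hex ⟨α, by rw [hα]; exact hp, hr⟩
      rw [hθ0, zero_mul]
    · rw [if_neg hr]

theorem transl_contra (hBinj : Set.InjOn 𝒢.rng B) (hLq : ∀ β ∈ B, T.q (L β) = β)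
    {g : S → R} (hg : T.Contra g) : T.Contra (T.transl B L g) := by
  intro t σ
  by_cases hex : ∃ β, β ∈ B ∧ 𝒢.rng β = 𝒢.rng (T.q σ)
  · obtain ⟨β, hβ, hrβ⟩ := hex
    have hrβ' : 𝒢.rng β = 𝒢.rng (T.q (T.act t σ)) := by rw [aux_q_act]; exact hrβ
    rw [transl_val T hBinj hβ hrβ' g, transl_val T hBinj hβ hrβ g]
    rw [aux_mul_act T t (aux_comp_invL T hLq hβ hrβ), hg t _]
  · have h2 : 𝒢.rng (T.q σ) ∉ 𝒢.rng '' B := by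
      rintro ⟨b, hb, hrb⟩; exact hex ⟨b, hb, hrb⟩
    have h2' : 𝒢.rng (T.q (T.act t σ)) ∉ 𝒢.rng '' B := by rw [aux_q_act]; exact h2
    rw [transl_zero T h2 g, transl_zero T h2' g, mul_zero]

theorem transl_locConst (hBc : IsCompact B) (hBo : IsOpen B) (hBinj : Set.InjOn 𝒢.rng B)
    (hLq : ∀ β ∈ B, T.q (L β) = β) (hLc : ContinuousOn L B)
    {g : S → R} (hglc : IsLocallyConstant g) :
    IsLocallyConstant (T.transl B L g) := by
  rw [IsLocallyConstant.iff_exists_open]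
  intro σ
  by_cases hmem : 𝒢.rng (T.q σ) ∈ 𝒢.rng '' B
  · obtain ⟨β₀, hβ₀, -⟩ := id hmem
    haveI : Nonempty G := ⟨β₀⟩
    set ρ : G → G := Function.invFunOn 𝒢.rng B with hρdef
    have hρmem : ∀ y ∈ 𝒢.rng '' B, ρ y ∈ B ∧ 𝒢.rng (ρ y) = y := by
      rintro y ⟨β, hβ, rfl⟩
      exact ⟨Function.invFunOn_mem ⟨β, hβ, rfl⟩, Function.invFunOn_eq ⟨β, hβ, rfl⟩⟩
    have hρc : ContinuousOn ρ (𝒢.rng '' B) := aux_invOn_cont hBo hBinj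
    have hU₀o : IsOpen ((fun σ' => 𝒢.rng (T.q σ')) ⁻¹' (𝒢.rng '' B)) :=
      (aux_openMap_rng 𝒢.toEtaleGroupoid B hBo).preimage
        ((aux_continuous_rng 𝒢.toEtaleGroupoid).comp T.continuous_q)
    set U₀ := (fun σ' => 𝒢.rng (T.q σ')) ⁻¹' (𝒢.rng '' B) with hU₀def
    have hrq : Continuous fun σ' : S => 𝒢.rng (T.q σ') :=
      (aux_continuous_rng 𝒢.toEtaleGroupoid).comp T.continuous_q
    set ψ : S → S := fun σ' => 𝒮.mul (𝒮.inv (L (ρ (𝒢.rng (T.q σ'))))) σ' with hψdef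
    have hψc : ContinuousOn ψ U₀ := by
      have c1 : ContinuousOn (fun σ' : S => ρ (𝒢.rng (T.q σ'))) U₀ :=
        hρc.comp hrq.continuousOn (fun σ' hσ' => hσ')
      have c2 : ContinuousOn (fun σ' : S => L (ρ (𝒢.rng (T.q σ')))) U₀ :=
        hLc.comp c1 (fun σ' hσ' => (hρmem _ hσ').1)
      have c3 : ContinuousOn (fun σ' : S => 𝒮.inv (L (ρ (𝒢.rng (T.q σ'))))) U₀ :=
        𝒮.continuous_inv.comp_continuousOn c2
      have c4 : ContinuousOn
          (fun σ' : S => ((𝒮.inv (L (ρ (𝒢.rng (T.q σ')))), σ') : S × S)) U₀ :=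
        c3.prodMk continuousOn_id
      refine 𝒮.continuousOn_mul.comp c4 ?_
      intro σ' hσ'
      show 𝒮.src (𝒮.inv (L (ρ (𝒢.rng (T.q σ'))))) = 𝒮.rng σ'
      exact aux_comp_invL T hLq (hρmem _ hσ').1 (hρmem _ hσ').2
    have hσU₀ : σ ∈ U₀ := hmem
    refine ⟨U₀ ∩ ψ ⁻¹' (g ⁻¹' {g (ψ σ)}), hψc.isOpen_inter_preimage hU₀o (hglc _),
      ⟨hσU₀, by simp⟩, ?_⟩
    rintro σ' ⟨hσ'U₀, hσ'v⟩
    have hv : ∀ τ : S, τ ∈ U₀ → T.transl B L g τ = g (ψ τ) := by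
      intro τ hτ
      exact transl_val T hBinj (hρmem _ hτ).1 (hρmem _ hτ).2 g
    rw [hv σ' hσ'U₀, hv σ hσU₀]
    simpa using hσ'v
  · have hcl : IsClosed (𝒢.rng '' B) :=
      (hBc.image (aux_continuous_rng 𝒢.toEtaleGroupoid)).isClosed
    refine ⟨(fun σ' => 𝒢.rng (T.q σ')) ⁻¹' (𝒢.rng '' B)ᶜ,
      hcl.isOpen_compl.preimage
        ((aux_continuous_rng 𝒢.toEtaleGroupoid).comp T.continuous_q), hmem, ?_⟩
    intro σ' hσ'
    rw [transl_zero T hσ' g, transl_zero T hmem g]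

theorem transl_MemA (hBc : IsCompact B) (hBo : IsOpen B) (hBinj : Set.InjOn 𝒢.rng B)
    (hLq : ∀ β ∈ B, T.q (L β) = β) (hLc : ContinuousOn L B)
    {g : S → R} (hg : T.MemA g) : T.MemA (T.transl B L g) := by
  have hlc := transl_locConst T hBc hBo hBinj hLq hLc hg.1
  have hco := transl_contra T hBinj hLq hg.2.1
  refine ⟨hlc, hco, ?_⟩
  refine IsCompact.of_isClosed_subset (aux_setMul_compact (𝒢 := 𝒢) hBc hg.2.2)
    (aux_qsupp_clopen T hlc hco).isClosed ?_
  rintro _ ⟨σ, hσ, rfl⟩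
  rw [Function.mem_support] at hσ
  by_cases hex : ∃ β, β ∈ B ∧ 𝒢.rng β = 𝒢.rng (T.q σ)
  · obtain ⟨β, hβ, hrβ⟩ := hex
    rw [transl_val T hBinj hβ hrβ g] at hσ
    have hcomp : 𝒮.src (𝒮.inv (L β)) = 𝒮.rng σ := aux_comp_invL T hLq hβ hrβ
    have hqδ : T.q (𝒮.mul (𝒮.inv (L β)) σ) = 𝒢.mul (𝒢.inv β) (T.q σ) := by
      rw [T.q_mul _ _ hcomp, T.q_inv, hLq β hβ]
    refine ⟨β, hβ, T.q (𝒮.mul (𝒮.inv (L β)) σ), ⟨_, hσ, rfl⟩, ?_, ?_⟩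
    · rw [hqδ, 𝒢.rng_mul _ _ (by rw [𝒢.src_inv, hrβ]), 𝒢.rng_inv]
    · rw [hqδ, ← 𝒢.mul_assoc' _ _ _ (by rw [𝒢.rng_inv]) (by rw [𝒢.src_inv, hrβ]),
        𝒢.mul_inv_self, hrβ, 𝒢.rng_mul_self]
  · exact absurd (transl_zero T (fun ⟨b, hb, hrb⟩ => hex ⟨b, hb, hrb⟩) g) hσ

end Theta


section EK

variable {K : Set G}

theorem aux_act_i_one {x : G} (hx : x ∈ 𝒢.unitSpace) (t : Rˣ) :
    T.act t (T.i x 1) = T.i x t := by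
  rw [aux_act_def T, aux_q_i T hx, aux_unit_rng _ hx, T.i_mul x hx t 1, mul_one]

theorem hKLq (hKu : K ⊆ 𝒢.unitSpace) : ∀ β ∈ K, T.q ((fun x => T.i x 1) β) = β := fun β hβ => aux_q_i T (hKu hβ) 1

theorem hKinj (hKu : K ⊆ 𝒢.unitSpace) : Set.InjOn 𝒢.rng K := by
  intro a ha b hb h
  rwa [aux_unit_rng _ (hKu ha), aux_unit_rng _ (hKu hb)] at h

theorem hKLc (hKu : K ⊆ 𝒢.unitSpace) : ContinuousOn (fun x => T.i x 1) K := (T.continuousOn_i 1).mono hKu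

theorem eK_MemA (hKc : IsCompact K) (hKo : IsOpen K) (hKu : K ⊆ 𝒢.unitSpace) :
    T.MemA (T.theta K (fun x => T.i x 1)) :=
  theta_MemA T hKc hKo (hKLq T hKu) (hKLc T hKu)

theorem transl_eK (hKu : K ⊆ 𝒢.unitSpace) (g : S → R) (σ : S) :
    T.transl K (fun x => T.i x 1) g σ = if 𝒢.rng (T.q σ) ∈ K then g σ else 0 := by
  by_cases h : 𝒢.rng (T.q σ) ∈ K
  · rw [if_pos h, transl_val T (hKinj hKu) h (aux_unit_rng _ (hKu h)) g]
    have h1 : 𝒮.inv (T.i (𝒢.rng (T.q σ)) 1) = T.i (𝒢.rng (T.q σ)) 1 :=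
      aux_unit_inv 𝒮 (aux_i_mem_unit T (hKu h))
    show g (𝒮.mul (𝒮.inv (T.i (𝒢.rng (T.q σ)) 1)) σ) = g σ
    rw [h1, ← aux_Srng T σ, 𝒮.rng_mul_self]
  · rw [if_neg h, transl_zero T ?_ g]
    rintro ⟨b, hb, hrb⟩
    exact h (by rw [← hrb, aux_unit_rng _ (hKu hb)]; exact hb)

theorem conv_eK_right (hKu : K ⊆ 𝒢.unitSpace) {g : S → R} (hg : T.Contra g) (σ : S) :
    T.conv g (T.theta K (fun x => T.i x 1)) σ = if 𝒢.src (T.q σ) ∈ K then g σ else 0 := by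
  have hconv : T.conv g (T.theta K (fun x => T.i x 1)) σ =
      ∑ᶠ α, if 𝒢.rng α = 𝒢.rng (T.q σ) then
        g (T.sec α) * T.theta K (fun x => T.i x 1) (𝒮.mul (𝒮.inv (T.sec α)) σ) else 0 := rfl
  have hforce : ∀ α, 𝒢.rng α = 𝒢.rng (T.q σ) →
      T.theta K (fun x => T.i x 1) (𝒮.mul (𝒮.inv (T.sec α)) σ) ≠ 0 →
      α = T.q σ ∧ 𝒢.src (T.q σ) ∈ K := by
    intro α hr h0
    have hx := theta_q_mem T (hKLq T hKu) h0
    have hcomp : 𝒮.src (𝒮.inv (T.sec α)) = 𝒮.rng σ := by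
      rw [𝒮.src_inv, aux_Srng T (T.sec α), aux_q_sec, hr, ← aux_Srng T σ]
    rw [T.q_mul _ _ hcomp, T.q_inv, aux_q_sec] at hx
    set x := 𝒢.mul (𝒢.inv α) (T.q σ) with hxdef
    have hGcomp : 𝒢.src (𝒢.inv α) = 𝒢.rng (T.q σ) := by rw [𝒢.src_inv, hr]
    have hsx : 𝒢.src x = 𝒢.src (T.q σ) := 𝒢.src_mul _ _ hGcomp
    have hxu : 𝒢.src x = x := aux_unit_src _ (hKu hx)
    have hsrcK : 𝒢.src (T.q σ) ∈ K := by rw [← hsx, hxu]; exact hx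
    have hrx : 𝒢.rng x = 𝒢.src α := by rw [hxdef, 𝒢.rng_mul _ _ hGcomp, 𝒢.rng_inv]
    have hxu2 : 𝒢.rng x = x := aux_unit_rng _ (hKu hx)
    have h7 : 𝒢.mul α x = T.q σ := by
      rw [hxdef, ← 𝒢.mul_assoc' α (𝒢.inv α) (T.q σ) (by rw [𝒢.rng_inv]) hGcomp,
        𝒢.mul_inv_self, hr, 𝒢.rng_mul_self]
    have h8 : x = 𝒢.src α := by rw [← hxu2, hrx]
    exact ⟨by rw [← h7, h8, 𝒢.mul_src_self], hsrcK⟩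
  by_cases hK : 𝒢.src (T.q σ) ∈ K
  · rw [if_pos hK, hconv, finsum_eq_single _ (T.q σ) ?_]
    · rw [if_pos rfl]
      obtain ⟨t, ht⟩ := aux_fiber T (aux_q_sec T (T.q σ))
      rw [ht, hg t σ]
      have hcomp : 𝒮.src (𝒮.inv σ) = 𝒮.rng σ := by rw [𝒮.src_inv]
      have h9 : 𝒮.mul (𝒮.inv (T.act t σ)) σ = T.act t⁻¹ (T.i (𝒢.src (T.q σ)) 1) := by
        rw [aux_inv_act, ← aux_act_mul T t⁻¹ hcomp, 𝒮.inv_mul_self, aux_Ssrc T σ]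
      rw [h9, theta_val T (hKLq T hKu) hK t⁻¹, _root_.inv_inv]
      rw [mul_comm, ← mul_assoc, ← Units.val_mul, mul_inv_cancel, Units.val_one, one_mul]
    · intro α hα
      by_cases hr : 𝒢.rng α = 𝒢.rng (T.q σ)
      · rw [if_pos hr]
        by_cases h0 : T.theta K (fun x => T.i x 1) (𝒮.mul (𝒮.inv (T.sec α)) σ) = 0
        · rw [h0, mul_zero]
        · exact absurd (hforce α hr h0).1 hα
      · rw [if_neg hr]
  · rw [if_neg hK, hconv]
    apply finsum_eq_zero_of_forall_eq_zero
    intro α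
    by_cases hr : 𝒢.rng α = 𝒢.rng (T.q σ)
    · rw [if_pos hr]
      by_cases h0 : T.theta K (fun x => T.i x 1) (𝒮.mul (𝒮.inv (T.sec α)) σ) = 0
      · rw [h0, mul_zero]
      · exact absurd (hforce α hr h0).2 hK
    · rw [if_neg hr]

end EK

theorem restrict_MemA {C : Set G} (hC : IsClopen C) {g : S → R} (hg : T.MemA g) :
    T.MemA (fun σ => if T.q σ ∈ C then g σ else 0) := by
  have hco : T.Contra (fun σ => if T.q σ ∈ C then g σ else 0) := by
    intro t σ
    simp only [aux_q_act]
    by_cases h : T.q σ ∈ C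
    · rw [if_pos h, if_pos h, hg.2.1 t σ]
    · rw [if_neg h, if_neg h, mul_zero]
  have hlc : IsLocallyConstant (fun σ => if T.q σ ∈ C then g σ else 0) := by
    rw [IsLocallyConstant.iff_exists_open]
    intro σ
    by_cases h : T.q σ ∈ C
    · obtain ⟨U, hUo, hUm, hU⟩ := (IsLocallyConstant.iff_exists_open g).mp hg.1 σ
      refine ⟨U ∩ T.q ⁻¹' C, hUo.inter (hC.isOpen.preimage T.continuous_q), ⟨hUm, h⟩, ?_⟩
      rintro σ' ⟨h1, h2⟩
      rw [Set.mem_preimage] at h2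
      rw [if_pos h2, if_pos h]
      exact hU σ' h1
    · refine ⟨T.q ⁻¹' Cᶜ, (hC.isClosed.isOpen_compl).preimage T.continuous_q, h, ?_⟩
      rintro σ' h2
      simp only [Set.mem_preimage, Set.mem_compl_iff] at h2
      simp only [if_neg h2, if_neg h]
  refine ⟨hlc, hco, IsCompact.of_isClosed_subset hg.2.2
    (aux_qsupp_clopen T hlc hco).isClosed ?_⟩
  apply Set.image_mono
  intro σ hσ
  rw [Function.mem_support] at hσ ⊢
  intro h0
  apply hσ
  by_cases h : T.q σ ∈ C
  · rw [if_pos h]; exact h0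
  · rw [if_neg h]

theorem aux_E_closed {f : S → R} (hlc : IsLocallyConstant f) (hco : T.Contra f) :
    IsClosed {α : G | ∃ γ, T.q γ = α ∧ f γ ≠ 0 ∧ γ ∉ interior 𝒮.iso} := by
  rw [← isOpen_compl_iff]
  refine isOpen_iff_forall_mem_open.mpr ?_
  intro α hα
  by_cases hD : α ∈ T.q '' Function.support f
  · obtain ⟨B₂, hB₂o, hB₂m, hbis₂, P, hPc, hPq, hgc, huniq, hopenIm⟩ := T.loc_triv α
    obtain ⟨γ₀, hγ₀s, hγ₀q⟩ := hD
    rw [Function.mem_support] at hγ₀s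
    have hfP : f (P α) ≠ 0 := by
      obtain ⟨t, ht⟩ := aux_fiber T ((hPq α hB₂m).trans hγ₀q.symm)
      rw [ht]
      exact aux_contra_ne T hco t hγ₀s
    have hPW : P α ∈ interior 𝒮.iso := by
      by_contra hPW
      exact hα ⟨P α, hPq α hB₂m, hfP, hPW⟩
    refine ⟨B₂ ∩ P ⁻¹' interior 𝒮.iso, ?_,
      hPc.isOpen_inter_preimage hB₂o isOpen_interior, ⟨hB₂m, hPW⟩⟩
    rintro β ⟨hβB, hβW⟩ ⟨γ, hγq, hγs, hγW⟩
    obtain ⟨t, ht⟩ := aux_fiber T (hγq.trans (hPq β hβB).symm)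
    exact hγW (ht ▸ aux_intIso_act T t hβW)
  · have hD2 := aux_qsupp_clopen T hlc hco
    refine ⟨(T.q '' Function.support f)ᶜ, ?_, hD2.isClosed.isOpen_compl, hD⟩
    rintro β hβ ⟨γ, hγq, hγs, -⟩
    exact hβ ⟨γ, hγs, hγq⟩

end DiscreteTwist

end UniquenessAux

/-- Generalised Uniqueness Theorem: if the units `u` with
`Σᵤᵘ ⊆ Iso(Σ)°` are dense in `Σ⁽⁰⁾`, then a ring homomorphism
`π : A_R(G;Σ) → Q` is injective iff it is nonzero on every nonzero element of
`A_R(Iso(G)°; Iso(Σ)°)` (included in `A_R(G;Σ)` as the functions supported in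
`Iso(Σ)°`). -/
theorem stmt_7 {R : Type*} [CommRing R] {G S : Type*}
    [TopologicalSpace G] [TopologicalSpace S] [T2Space G] [T2Space S]
    {𝒢 : AmpleGroupoid G} {𝒮 : EtaleGroupoid S} (T : DiscreteTwist R 𝒢 𝒮)
    (hdense : 𝒮.unitSpace ⊆
      closure {u ∈ 𝒮.unitSpace | 𝒮.isoAt u ⊆ interior 𝒮.iso})
    {Q : Type*} [Ring Q] (π : (S → R) → Q)
    (hzero : π 0 = 0)
    (hadd : ∀ f g, T.MemA f → T.MemA g → π (f + g) = π f + π g)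
    (hmul : ∀ f g, T.MemA f → T.MemA g → π (T.conv f g) = π f * π g) :
    Set.InjOn π {f | T.MemA f} ↔
      ∀ f : S → R, T.MemA f → Function.support f ⊆ interior 𝒮.iso →
        f ≠ 0 → π f ≠ 0 := by
  classical
  open EtaleGroupoid DiscreteTwist in
  constructor
  · intro hinj f hf hsupp hne h0
    exact hne (hinj (Set.mem_setOf.mpr hf) (Set.mem_setOf.mpr (T.aux_MemA_zero))
      (by rw [h0, hzero]))
  · intro hcond f hfMem g hgMem hπ
    rw [Set.mem_setOf_eq] at hfMem hgMem
    by_contra hne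
    set h : S → R := f + (-g) with hdef
    have hgM : T.MemA (-g) := T.aux_MemA_neg hgMem
    have hhM : T.MemA h := T.aux_MemA_add hfMem hgM
    have hπg : π (-g) = -π g := by
      have h1 : π (g + (-g)) = π g + π (-g) := hadd g (-g) hgMem hgM
      have h2 : g + (-g) = 0 := by funext σ; simp
      rw [h2, hzero] at h1
      exact (neg_eq_of_add_eq_zero_right h1.symm).symm
    have hπh : π h = 0 := by
      rw [hdef, hadd f (-g) hfMem hgM, hπg, hπ, add_neg_cancel]
    have hne' : h ≠ 0 := by
      intro h0
      apply hne
      funext σ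
      have h1 := congrFun h0 σ
      rw [hdef] at h1
      simpa [add_neg_eq_zero] using h1
    obtain ⟨σ₀, hσ₀⟩ : ∃ σ, h σ ≠ 0 := by
      by_contra hall
      push_neg at hall
      exact hne' (funext hall)
    obtain ⟨B, hBo, hBm, hbis, P, hPc, hPq, hgc, huniq, hopenIm⟩ := T.loc_triv (T.q σ₀)
    obtain ⟨B', hB'cob, hB'm, hB'sub⟩ := 𝒢.ample.exists_subset_of_mem_open hBm hBo
    obtain ⟨hB'c, hB'o, hB'bis⟩ := hB'cob
    set BB := 𝒢.inv '' B' with hBBdef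
    set L : G → S := fun β => 𝒮.inv (P (𝒢.inv β)) with hLdef
    have hBBc : IsCompact BB := hB'c.image 𝒢.continuous_inv
    have hBBo : IsOpen BB := by
      have heq : BB = 𝒢.inv ⁻¹' B' := by
        ext b
        constructor
        · rintro ⟨a, ha, rfl⟩; simpa [𝒢.inv_inv] using ha
        · intro hb; exact ⟨𝒢.inv b, hb, 𝒢.inv_inv b⟩
      rw [heq]
      exact hB'o.preimage 𝒢.continuous_inv
    have hBBinj : Set.InjOn 𝒢.rng BB := by
      rintro _ ⟨a, ha, rfl⟩ _ ⟨b, hb, rfl⟩ hr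
      rw [𝒢.rng_inv, 𝒢.rng_inv] at hr
      rw [hB'bis.1 ha hb hr]
    have hBBLq : ∀ β ∈ BB, T.q (L β) = β := by
      rintro _ ⟨b, hb, rfl⟩
      show T.q (𝒮.inv (P (𝒢.inv (𝒢.inv b)))) = 𝒢.inv b
      rw [𝒢.inv_inv, T.q_inv, hPq b (hB'sub hb)]
    have hBBLc : ContinuousOn L BB := by
      apply 𝒮.continuous_inv.comp_continuousOn
      apply hPc.comp 𝒢.continuous_inv.continuousOn
      rintro _ ⟨b, hb, rfl⟩
      show 𝒢.inv (𝒢.inv b) ∈ B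
      rw [𝒢.inv_inv]
      exact hB'sub hb
    set f₀ := T.transl BB L h with hf₀def
    have hf₀M : T.MemA f₀ := T.transl_MemA hBBc hBBo hBBinj hBBLq hBBLc hhM
    have hθM : T.MemA (T.theta BB L) := T.theta_MemA hBBc hBBo hBBLq hBBLc
    have hf₀conv : T.conv (T.theta BB L) h = f₀ := T.conv_theta hBBinj hBBLq hhM.2.1
    have hπf₀ : π f₀ = 0 := by
      rw [← hf₀conv, hmul _ _ hθM hhM, hπh, mul_zero]
    set x₀ := 𝒢.src (T.q σ₀) with hx₀def
    have hx₀u : x₀ ∈ 𝒢.unitSpace := aux_src_mem _ _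
    set u₀ := T.i x₀ 1 with hu₀def
    have hβmem : 𝒢.inv (T.q σ₀) ∈ BB := ⟨T.q σ₀, hB'm, rfl⟩
    have hqu₀ : T.q u₀ = x₀ := T.aux_q_i hx₀u 1
    have hrr : 𝒢.rng (𝒢.inv (T.q σ₀)) = 𝒢.rng (T.q u₀) := by
      rw [𝒢.rng_inv, hqu₀, aux_unit_rng _ hx₀u]
    have hval : f₀ u₀ = h (P (T.q σ₀)) := by
      rw [hf₀def, T.transl_val hBBinj hβmem hrr h]
      have hL1 : L (𝒢.inv (T.q σ₀)) = 𝒮.inv (P (T.q σ₀)) := by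
        show 𝒮.inv (P (𝒢.inv (𝒢.inv (T.q σ₀)))) = _
        rw [𝒢.inv_inv]
      rw [hL1, 𝒮.inv_inv]
      have hsrcP : 𝒮.src (P (T.q σ₀)) = u₀ := by
        rw [aux_Ssrc T, hPq _ hBm]
      rw [← hsrcP, 𝒮.mul_src_self]
    have hPne : h (P (T.q σ₀)) ≠ 0 := by
      obtain ⟨t, ht⟩ := aux_fiber T (hPq _ hBm).symm
      intro h0
      apply hσ₀
      rw [ht, hhM.2.1 t _, h0, mul_zero]
    have hf₀ne : f₀ u₀ ≠ 0 := by rw [hval]; exact hPne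
    have hu₀unit : u₀ ∈ 𝒮.unitSpace := T.aux_i_mem_unit hx₀u
    have hu₀cl := hdense hu₀unit
    have hNopen : IsOpen (f₀ ⁻¹' {f₀ u₀}) := hf₀M.1 _
    obtain ⟨u, huN, huX⟩ := (mem_closure_iff.mp hu₀cl (f₀ ⁻¹' {f₀ u₀}) hNopen (by
      simp only [Set.mem_preimage, Set.mem_singleton_iff]))
    obtain ⟨huUnit, huIso⟩ := huX
    have hf₀u : f₀ u ≠ 0 := by
      have heq : f₀ u = f₀ u₀ := by simpa using huN
      rw [heq]
      exact hf₀ne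
    set x := T.q u with hxdef
    have hxu : x ∈ 𝒢.unitSpace := T.q_unit_bij.mapsTo huUnit
    have huix : u = T.i x 1 := T.aux_unit_over huUnit hxu rfl
    set E := {α : G | ∃ γ, T.q γ = α ∧ f₀ γ ≠ 0 ∧ γ ∉ interior 𝒮.iso} with hEdef
    have hEclosed : IsClosed E := T.aux_E_closed hf₀M.1 hf₀M.2.1
    have hEsub : E ⊆ T.q '' Function.support f₀ := by
      rintro α ⟨γ, hγq, hγs, -⟩
      exact ⟨γ, hγs, hγq⟩
    have hEcomp : IsCompact E := IsCompact.of_isClosed_subset hf₀M.2.2 hEclosed hEsub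
    have hEx : ∀ α ∈ E, ¬(𝒢.src α = x ∧ 𝒢.rng α = x) := by
      rintro α ⟨γ, hγq, hγs, hγW⟩ ⟨hs, hr⟩
      refine hγW (huIso ⟨?_, ?_⟩)
      · rw [aux_Srng T γ, hγq, hr, ← huix]
      · rw [aux_Ssrc T γ, hγq, hs, ← huix]
    set M := (fun α => (𝒢.src α, 𝒢.rng α)) '' E with hMdef
    have hMcomp : IsCompact M := hEcomp.image
      ((aux_continuous_src 𝒢.toEtaleGroupoid).prodMk (aux_continuous_rng 𝒢.toEtaleGroupoid))
    have hMclosed : IsClosed M := hMcomp.isClosed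
    have hxxM : ((x, x) : G × G) ∉ M := by
      rintro ⟨α, hαE, hα⟩
      exact hEx α hαE ⟨congrArg Prod.fst hα, congrArg Prod.snd hα⟩
    have hnb : Mᶜ ∈ nhds ((x, x) : G × G) := hMclosed.isOpen_compl.mem_nhds hxxM
    obtain ⟨U₁, U₂, hU₁o, hxU₁, hU₂o, hxU₂, hprod⟩ := mem_nhds_prod_iff'.mp hnb
    have hopenU : IsOpen (U₁ ∩ U₂ ∩ 𝒢.unitSpace) :=
      (hU₁o.inter hU₂o).inter (aux_open_unitSpace 𝒢.toEtaleGroupoid)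
    have hxmem : x ∈ U₁ ∩ U₂ ∩ 𝒢.unitSpace := ⟨⟨hxU₁, hxU₂⟩, hxu⟩
    obtain ⟨K, hKcob, hxK, hKsub⟩ := 𝒢.ample.exists_subset_of_mem_open hxmem hopenU
    obtain ⟨hKc, hKo, -⟩ := hKcob
    have hKu : K ⊆ 𝒢.unitSpace := fun y hy => (hKsub hy).2
    set eK := T.theta K (fun y => T.i y 1) with heKdef
    have heKM : T.MemA eK := T.eK_MemA hKc hKo hKu
    have hKclopen : IsClopen K := ⟨hKc.isClosed, hKo⟩
    set f₁ : S → R := fun σ => if T.q σ ∈ 𝒢.src ⁻¹' K then f₀ σ else 0 with hf₁def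
    have hf₁val : ∀ σ, f₁ σ = if 𝒢.src (T.q σ) ∈ K then f₀ σ else 0 := fun σ => rfl
    have hf₁M : T.MemA f₁ :=
      T.restrict_MemA (hKclopen.preimage (aux_continuous_src 𝒢.toEtaleGroupoid)) hf₀M
    have hconv1 : T.conv f₀ eK = f₁ := by
      funext σ
      rw [T.conv_eK_right hKu hf₀M.2.1 σ, hf₁val σ]
    set Cfin : Set G := 𝒢.rng ⁻¹' K ∩ 𝒢.src ⁻¹' K with hCdef
    set hfin : S → R := fun σ => @ite R (T.q σ ∈ Cfin) (Classical.propDecidable _) (f₀ σ) 0 with hfindef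
    have hfinval : ∀ σ, hfin σ = @ite R (T.q σ ∈ Cfin) (Classical.propDecidable _) (f₀ σ) 0 := fun σ => rfl
    have hCclop : IsClopen Cfin := by
      rw [hCdef]
      exact (hKclopen.preimage (aux_continuous_rng 𝒢.toEtaleGroupoid)).inter
        (hKclopen.preimage (aux_continuous_src 𝒢.toEtaleGroupoid))
    have hfinM : T.MemA hfin := by
      rw [hfindef]
      exact T.restrict_MemA hCclop hf₀M
    have hconv2 : T.conv eK f₁ = hfin := by
      rw [heKdef, T.conv_theta (DiscreteTwist.hKinj hKu) (DiscreteTwist.hKLq T hKu) hf₁M.2.1]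
      funext σ
      rw [T.transl_eK hKu f₁ σ, hfinval σ]
      by_cases hr : 𝒢.rng (T.q σ) ∈ K
      · rw [if_pos hr, hf₁val σ]
        by_cases hs : 𝒢.src (T.q σ) ∈ K
        · rw [if_pos hs, if_pos (show T.q σ ∈ Cfin by rw [hCdef]; exact ⟨hr, hs⟩)]
        · rw [if_neg hs, if_neg (fun hc : T.q σ ∈ Cfin => hs (by rw [hCdef] at hc; exact hc.2))]
      · rw [if_neg hr, if_neg (fun hc : T.q σ ∈ Cfin => hr (by rw [hCdef] at hc; exact hc.1))]
    have hπfin : π hfin = 0 := by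
      rw [← hconv2, hmul _ _ heKM hf₁M, ← hconv1, hmul _ _ hf₀M heKM, hπf₀, zero_mul, mul_zero]
    have hsupp2 : Function.support hfin ⊆ interior 𝒮.iso := by
      intro γ hγ
      rw [Function.mem_support, hfinval γ] at hγ
      by_cases hc : T.q γ ∈ Cfin
      · rw [if_pos hc] at hγ
        rw [hCdef] at hc
        by_contra hW
        have hEγ : T.q γ ∈ E := ⟨γ, rfl, hγ, hW⟩
        have hM : (𝒢.src (T.q γ), 𝒢.rng (T.q γ)) ∈ M := ⟨T.q γ, hEγ, rfl⟩
        exact hprod ⟨(hKsub hc.2).1.1, (hKsub hc.1).1.2⟩ hM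
      · rw [if_neg hc] at hγ
        exact absurd rfl hγ
    have hne2 : hfin ≠ 0 := by
      intro h0
      have h1 := congrFun h0 u
      rw [hfinval u] at h1
      have hcu : T.q u ∈ Cfin := by
        rw [hCdef]
        constructor
        · show 𝒢.rng (T.q u) ∈ K
          rw [← hxdef, aux_unit_rng _ hxu]
          exact hxK
        · show 𝒢.src (T.q u) ∈ K
          rw [← hxdef, aux_unit_src _ hxu]
          exact hxK
      rw [if_pos hcu] at h1
      exact hf₀u h1
    exact hcond hfin hfinM hsupp2 hne2 hπfin
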